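/- Consider the finite-horizon LTV system x'(t)=A(t)x(t)+B(t)d(t), e_I(t)=C_I(t)x(t)+D_I(t)d(t), e_E(t)=C_E(t)x(t) on [0,T], and let γ>0. Define Q(t):=C_I(t)ᵀC_I(t), S(t):=C_I(t)ᵀD_I(t), R(t):=D_I(t)ᵀD_I(t)−γ²I, and F:=C_E(T)ᵀC_E(T). Suppose R(t) is negative definite for all t∈[0,T] and there exists a continuously differentiable symmetric-matrix-valued P:[0,T]→S^{n_x} with P(T)=F satisfying P'(t)+A(t)ᵀP(t)+P(t)A(t)+Q(t)−(P(t)B(t)+S(t))R(t)⁻¹(P(t)B(t)+S(t))ᵀ=0 for all t∈[0,T]. Then for every continuous disturbance d:[0,T]→ℝ^{n_d} and every trajectory x with x(0)=0, the performance bound ‖e_E(T)‖² + ∫₀ᵀ‖e_I(t)‖² dt ≤ γ² ∫₀ᵀ‖d(t)‖² dt holds. -/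

import Mathlib

open Matrix Set


lemma mvdm {l m n : ℕ} (M : Matrix (Fin m) (Fin l) ℝ) (N : Matrix (Fin m) (Fin n) ℝ)
    (v : Fin l → ℝ) (w : Fin n → ℝ) :
    (M *ᵥ v) ⬝ᵥ (N *ᵥ w) = v ⬝ᵥ ((Mᵀ * N) *ᵥ w) := by
  rw [Matrix.dotProduct_mulVec, Matrix.dotProduct_mulVec, Matrix.vecMul_mulVec]

lemma mvdm' {l m n : ℕ} (M : Matrix (Fin m) (Fin l) ℝ) (N : Matrix (Fin m) (Fin n) ℝ)
    (v : Fin l → ℝ) (w : Fin n → ℝ) :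
    (M *ᵥ v) ⬝ᵥ (N *ᵥ w) = w ⬝ᵥ ((Nᵀ * M) *ᵥ v) := by
  rw [dotProduct_comm, mvdm]

lemma completion_sq {nx nd nI : ℕ}
    (a : Matrix (Fin nx) (Fin nx) ℝ) (b : Matrix (Fin nx) (Fin nd) ℝ)
    (ci : Matrix (Fin nI) (Fin nx) ℝ) (di : Matrix (Fin nI) (Fin nd) ℝ)
    (p p' : Matrix (Fin nx) (Fin nx) ℝ) (γ : ℝ)
    (X : Fin nx → ℝ) (D : Fin nd → ℝ)
    (hp : pᵀ = p)
    (hdet : IsUnit (diᵀ * di - γ ^ 2 • (1 : Matrix (Fin nd) (Fin nd) ℝ)).det)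
    (hRDE : p' + aᵀ * p + p * a + ciᵀ * ci -
        (p * b + ciᵀ * di) * (diᵀ * di - γ ^ 2 • (1 : Matrix (Fin nd) (Fin nd) ℝ))⁻¹ *
        (p * b + ciᵀ * di)ᵀ = 0) :
    (a *ᵥ X + b *ᵥ D) ⬝ᵥ (p *ᵥ X) + X ⬝ᵥ (p' *ᵥ X)
      + X ⬝ᵥ (p *ᵥ (a *ᵥ X + b *ᵥ D))
      + (ci *ᵥ X + di *ᵥ D) ⬝ᵥ (ci *ᵥ X + di *ᵥ D)
      - γ ^ 2 * (D ⬝ᵥ D)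
    = (D + ((diᵀ * di - γ ^ 2 • (1 : Matrix (Fin nd) (Fin nd) ℝ))⁻¹ * (p * b + ciᵀ * di)ᵀ) *ᵥ X)
      ⬝ᵥ ((diᵀ * di - γ ^ 2 • (1 : Matrix (Fin nd) (Fin nd) ℝ)) *ᵥ
        (D + ((diᵀ * di - γ ^ 2 • (1 : Matrix (Fin nd) (Fin nd) ℝ))⁻¹ * (p * b + ciᵀ * di)ᵀ) *ᵥ X)) := by
  set R : Matrix (Fin nd) (Fin nd) ℝ := diᵀ * di - γ ^ 2 • (1 : Matrix (Fin nd) (Fin nd) ℝ) with hRdef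
  set L : Matrix (Fin nx) (Fin nd) ℝ := p * b + ciᵀ * di with hLdef
  have hRsym : Rᵀ = R := by
    rw [hRdef, Matrix.transpose_sub, Matrix.transpose_mul, Matrix.transpose_transpose,
      Matrix.transpose_smul, Matrix.transpose_one]
  have hRinv_sym : (R⁻¹)ᵀ = R⁻¹ := by rw [Matrix.transpose_nonsing_inv, hRsym]
  have hRR : R * R⁻¹ = 1 := Matrix.mul_nonsing_inv R hdet
  have hRR' : R⁻¹ * R = 1 := Matrix.nonsing_inv_mul R hdet
  have hEq : p' + aᵀ * p + p * a + ciᵀ * ci = L * R⁻¹ * Lᵀ := by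
    have := hRDE; rwa [sub_eq_zero] at this
  -- h1
  have h1 : (a *ᵥ X + b *ᵥ D) ⬝ᵥ (p *ᵥ X)
      = X ⬝ᵥ ((aᵀ * p) *ᵥ X) + X ⬝ᵥ ((p * b) *ᵥ D) := by
    rw [add_dotProduct, mvdm, mvdm' b p D X, hp]
  have h2 : X ⬝ᵥ (p *ᵥ (a *ᵥ X + b *ᵥ D))
      = X ⬝ᵥ ((p * a) *ᵥ X) + X ⬝ᵥ ((p * b) *ᵥ D) := by
    rw [Matrix.mulVec_add, dotProduct_add, Matrix.mulVec_mulVec, Matrix.mulVec_mulVec]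
  have h3 : (ci *ᵥ X + di *ᵥ D) ⬝ᵥ (ci *ᵥ X + di *ᵥ D)
      = X ⬝ᵥ ((ciᵀ * ci) *ᵥ X) + 2 * (X ⬝ᵥ ((ciᵀ * di) *ᵥ D)) + D ⬝ᵥ ((diᵀ * di) *ᵥ D) := by
    rw [add_dotProduct, dotProduct_add, dotProduct_add,
      mvdm ci ci, mvdm ci di, mvdm' di ci, mvdm di di]
    ring
  have h4 : γ ^ 2 * (D ⬝ᵥ D) = D ⬝ᵥ ((γ ^ 2 • (1 : Matrix (Fin nd) (Fin nd) ℝ)) *ᵥ D) := by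
    rw [Matrix.smul_mulVec, Matrix.one_mulVec, dotProduct_smul, smul_eq_mul]
  have h8 : D ⬝ᵥ ((diᵀ * di) *ᵥ D) - D ⬝ᵥ ((γ ^ 2 • (1 : Matrix (Fin nd) (Fin nd) ℝ)) *ᵥ D)
      = D ⬝ᵥ (R *ᵥ D) := by
    rw [hRdef, Matrix.sub_mulVec, dotProduct_sub]
  have h6 : X ⬝ᵥ ((aᵀ * p) *ᵥ X) + X ⬝ᵥ (p' *ᵥ X) + X ⬝ᵥ ((p * a) *ᵥ X)
      + X ⬝ᵥ ((ciᵀ * ci) *ᵥ X) = X ⬝ᵥ ((L * R⁻¹ * Lᵀ) *ᵥ X) := by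
    rw [← dotProduct_add, ← dotProduct_add, ← dotProduct_add,
      ← Matrix.add_mulVec, ← Matrix.add_mulVec, ← Matrix.add_mulVec]
    congr 2
    rw [← hEq]; abel
  have h7 : X ⬝ᵥ ((p * b) *ᵥ D) + X ⬝ᵥ ((ciᵀ * di) *ᵥ D) = X ⬝ᵥ (L *ᵥ D) := by
    rw [← dotProduct_add, ← Matrix.add_mulVec, hLdef]
  -- RHS expansion
  have h5 : (D + (R⁻¹ * Lᵀ) *ᵥ X) ⬝ᵥ (R *ᵥ (D + (R⁻¹ * Lᵀ) *ᵥ X))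
      = D ⬝ᵥ (R *ᵥ D) + 2 * (X ⬝ᵥ (L *ᵥ D)) + X ⬝ᵥ ((L * R⁻¹ * Lᵀ) *ᵥ X) := by
    have hK : Lᵀᵀ = L := Matrix.transpose_transpose L
    have e1 : R *ᵥ ((R⁻¹ * Lᵀ) *ᵥ X) = Lᵀ *ᵥ X := by
      rw [Matrix.mulVec_mulVec, ← Matrix.mul_assoc, hRR, Matrix.one_mul]
    rw [Matrix.mulVec_add, add_dotProduct, dotProduct_add,
      dotProduct_add, e1]
    have t2 : D ⬝ᵥ (Lᵀ *ᵥ X) = X ⬝ᵥ (L *ᵥ D) := by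
      rw [dotProduct_comm, Matrix.dotProduct_mulVec, Matrix.mulVec_transpose]
    have t3 : ((R⁻¹ * Lᵀ) *ᵥ X) ⬝ᵥ (R *ᵥ D) = X ⬝ᵥ (L *ᵥ D) := by
      rw [mvdm]
      congr 2
      rw [Matrix.transpose_mul, hRinv_sym, hK, Matrix.mul_assoc, hRR', Matrix.mul_one]
    have t4 : ((R⁻¹ * Lᵀ) *ᵥ X) ⬝ᵥ (Lᵀ *ᵥ X) = X ⬝ᵥ ((L * R⁻¹ * Lᵀ) *ᵥ X) := by
      rw [mvdm]
      congr 2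
      rw [Matrix.transpose_mul, hRinv_sym, hK, Matrix.mul_assoc]
    rw [t2, t3, t4]; ring
  rw [h1, h2, h3, h5]
  linarith [h4, h8, h6, h7]


lemma hasDerivAt_quad {n : ℕ} (P : ℝ → Matrix (Fin n) (Fin n) ℝ)
    (Pd : Matrix (Fin n) (Fin n) ℝ) (x : ℝ → Fin n → ℝ) (xd : Fin n → ℝ) (t : ℝ)
    (hx : ∀ i, HasDerivAt (fun s => x s i) (xd i) t)
    (hP : ∀ i j, HasDerivAt (fun s => P s i j) (Pd i j) t) :
    HasDerivAt (fun s => x s ⬝ᵥ (P s *ᵥ x s))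
      (xd ⬝ᵥ (P t *ᵥ x t) + x t ⬝ᵥ (Pd *ᵥ x t) + x t ⬝ᵥ (P t *ᵥ xd)) t := by
  have h : ∀ i ∈ Finset.univ, HasDerivAt (fun s => x s i * ∑ j, P s i j * x s j)
      (xd i * (∑ j, P t i j * x t j) + x t i * (∑ j, (Pd i j * x t j + P t i j * xd j))) t :=
    fun i _ => (hx i).mul (HasDerivAt.fun_sum fun j _ => ((hP i j).mul (hx j)))
  have := HasDerivAt.fun_sum h
  refine this.congr_deriv ?_
  simp only [mul_add, Finset.sum_add_distrib, dotProduct, mulVec, Finset.mul_sum]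
  ring

lemma contOn_dot {m : ℕ} (u v : ℝ → Fin m → ℝ) (s : Set ℝ)
    (hu : ∀ i, ContinuousOn (fun t => u t i) s) (hv : ∀ i, ContinuousOn (fun t => v t i) s) :
    ContinuousOn (fun t => u t ⬝ᵥ v t) s := by
  simp only [dotProduct]
  exact continuousOn_finset_sum _ fun i _ => (hu i).mul (hv i)

lemma contOn_mulVec {m n : ℕ} (M : ℝ → Matrix (Fin m) (Fin n) ℝ) (v : ℝ → Fin n → ℝ)
    (s : Set ℝ) (hM : ∀ i j, ContinuousOn (fun t => M t i j) s)
    (hv : ∀ j, ContinuousOn (fun t => v t j) s) :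
    ∀ i, ContinuousOn (fun t => (M t *ᵥ v t) i) s := by
  intro i
  simp only [mulVec, dotProduct]
  exact continuousOn_finset_sum _ fun j _ => (hM i j).mul (hv j)


/-- If the Riccati Differential Equation has a solution with terminal
condition `P(T) = C_E(T)ᵀ C_E(T)` and `R(t) ≺ 0` on `[0,T]`, then the finite-horizon
performance bound with gain `γ` holds for every trajectory starting at `x(0)=0`. -/
theorem RDE_implies_finite_horizon_performance
    {nx nd nI nE : ℕ} {T : ℝ} (hT : 0 < T)
    (A : ℝ → Matrix (Fin nx) (Fin nx) ℝ)
    (B : ℝ → Matrix (Fin nx) (Fin nd) ℝ)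
    (CI : ℝ → Matrix (Fin nI) (Fin nx) ℝ)
    (DI : ℝ → Matrix (Fin nI) (Fin nd) ℝ)
    (CE : ℝ → Matrix (Fin nE) (Fin nx) ℝ)
    (hA : ∀ i j, ContinuousOn (fun t => A t i j) (Icc 0 T))
    (hB : ∀ i j, ContinuousOn (fun t => B t i j) (Icc 0 T))
    (hCI : ∀ i j, ContinuousOn (fun t => CI t i j) (Icc 0 T))
    (hDI : ∀ i j, ContinuousOn (fun t => DI t i j) (Icc 0 T))
    (hCE : ∀ i j, ContinuousOn (fun t => CE t i j) (Icc 0 T))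
    (γ : ℝ) (hγ : 0 < γ)
    -- R(t) ≺ 0 on [0,T]
    (hR : ∀ t ∈ Icc (0:ℝ) T, ∀ v : Fin nd → ℝ, v ≠ 0 →
      v ⬝ᵥ (((DI t)ᵀ * DI t - γ ^ 2 • (1 : Matrix (Fin nd) (Fin nd) ℝ)) *ᵥ v) < 0)
    -- continuously differentiable symmetric P solving the RDE with P(T) = F
    (P P' : ℝ → Matrix (Fin nx) (Fin nx) ℝ)
    (hPsym : ∀ t ∈ Icc (0:ℝ) T, (P t)ᵀ = P t)
    (hPderiv : ∀ t ∈ Icc (0:ℝ) T, ∀ i j, HasDerivAt (fun s => P s i j) (P' t i j) t)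
    (hP'cont : ∀ i j, ContinuousOn (fun t => P' t i j) (Icc 0 T))
    (hPT : P T = (CE T)ᵀ * CE T)
    (hRDE : ∀ t ∈ Icc (0:ℝ) T,
      P' t + (A t)ᵀ * P t + P t * A t + (CI t)ᵀ * CI t -
        (P t * B t + (CI t)ᵀ * DI t) *
          ((DI t)ᵀ * DI t - γ ^ 2 • (1 : Matrix (Fin nd) (Fin nd) ℝ))⁻¹ *
        (P t * B t + (CI t)ᵀ * DI t)ᵀ = 0) :
    ∀ (d : ℝ → Fin nd → ℝ) (x : ℝ → Fin nx → ℝ),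
      (∀ i, ContinuousOn (fun t => d t i) (Icc 0 T)) →
      x 0 = 0 →
      (∀ t ∈ Icc (0:ℝ) T, ∀ i,
        HasDerivAt (fun s => x s i) ((A t *ᵥ x t + B t *ᵥ d t) i) t) →
      (CE T *ᵥ x T) ⬝ᵥ (CE T *ᵥ x T) +
        (∫ t in (0:ℝ)..T,
          (CI t *ᵥ x t + DI t *ᵥ d t) ⬝ᵥ (CI t *ᵥ x t + DI t *ᵥ d t)) ≤
      γ ^ 2 * ∫ t in (0:ℝ)..T, (d t) ⬝ᵥ (d t) := by
  intro d x hd hx0 hx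
  have hIcc : uIcc (0:ℝ) T = Icc 0 T := uIcc_of_le hT.le
  -- determinant of R(t) is a unit
  have hdet : ∀ t ∈ Icc (0:ℝ) T,
      IsUnit ((DI t)ᵀ * DI t - γ ^ 2 • (1 : Matrix (Fin nd) (Fin nd) ℝ)).det := by
    intro t ht
    refine isUnit_iff_ne_zero.2 (Matrix.separatingLeft_iff_det_ne_zero.1 (Matrix.separatingLeft_def.2 ?_))
    intro v hv
    by_contra hv0
    have := hR t ht v hv0
    rw [hv v] at this
    exact lt_irrefl 0 this
  -- continuity of x and P on [0,T]
  have hxc : ∀ i, ContinuousOn (fun t => x t i) (Icc 0 T) :=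
    fun i t ht => ((hx t ht i).continuousAt).continuousWithinAt
  have hPc : ∀ i j, ContinuousOn (fun t => P t i j) (Icc 0 T) :=
    fun i j t ht => ((hPderiv t ht i j).continuousAt).continuousWithinAt
  -- the "closed loop" vector field and its continuity
  set f : ℝ → Fin nx → ℝ := fun t => A t *ᵥ x t + B t *ᵥ d t with hfdef
  have hfc : ∀ i, ContinuousOn (fun t => f t i) (Icc 0 T) := by
    intro i
    exact ((contOn_mulVec A x _ hA hxc i).add (contOn_mulVec B d _ hB hd i))
  -- the storage function and its derivative
  set V : ℝ → ℝ := fun t => x t ⬝ᵥ (P t *ᵥ x t) with hVdef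
  set W : ℝ → ℝ := fun t =>
    f t ⬝ᵥ (P t *ᵥ x t) + x t ⬝ᵥ (P' t *ᵥ x t) + x t ⬝ᵥ (P t *ᵥ f t) with hWdef
  have hV : ∀ t ∈ Icc (0:ℝ) T, HasDerivAt V (W t) t := by
    intro t ht
    exact hasDerivAt_quad P (P' t) x (f t) t (hx t ht) (hPderiv t ht)
  have hWc : ContinuousOn W (Icc 0 T) := by
    refine ((contOn_dot _ _ _ hfc (contOn_mulVec P x _ hPc hxc)).add
      (contOn_dot _ _ _ hxc (contOn_mulVec P' x _ hP'cont hxc))).add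
      (contOn_dot _ _ _ hxc (contOn_mulVec P f _ hPc hfc))
  -- the comparison function
  set G : ℝ → ℝ := fun t => γ ^ 2 * (d t ⬝ᵥ d t) -
    (CI t *ᵥ x t + DI t *ᵥ d t) ⬝ᵥ (CI t *ᵥ x t + DI t *ᵥ d t) with hGdef
  have heIc : ∀ i, ContinuousOn
      (fun t => (CI t *ᵥ x t + DI t *ᵥ d t) i) (Icc 0 T) := by
    intro i
    exact (contOn_mulVec CI x _ hCI hxc i).add (contOn_mulVec DI d _ hDI hd i)
  have heIdotc : ContinuousOn
      (fun t => (CI t *ᵥ x t + DI t *ᵥ d t) ⬝ᵥ (CI t *ᵥ x t + DI t *ᵥ d t)) (Icc 0 T) :=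
    contOn_dot _ _ _ heIc heIc
  have hddotc : ContinuousOn (fun t => d t ⬝ᵥ d t) (Icc 0 T) := contOn_dot _ _ _ hd hd
  have hGc : ContinuousOn G (Icc 0 T) := (continuousOn_const.mul hddotc).sub heIdotc
  -- interval integrability
  have hWint : IntervalIntegrable W MeasureTheory.volume 0 T :=
    (hIcc ▸ hWc : ContinuousOn W (uIcc 0 T)).intervalIntegrable
  have hGint : IntervalIntegrable G MeasureTheory.volume 0 T :=
    (hIcc ▸ hGc : ContinuousOn G (uIcc 0 T)).intervalIntegrable
  have heIint : IntervalIntegrable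
      (fun t => (CI t *ᵥ x t + DI t *ᵥ d t) ⬝ᵥ (CI t *ᵥ x t + DI t *ᵥ d t))
      MeasureTheory.volume 0 T :=
    (hIcc ▸ heIdotc : ContinuousOn _ (uIcc 0 T)).intervalIntegrable
  have hdint : IntervalIntegrable (fun t => d t ⬝ᵥ d t) MeasureTheory.volume 0 T :=
    (hIcc ▸ hddotc : ContinuousOn _ (uIcc 0 T)).intervalIntegrable
  -- FTC
  have hFTC : ∫ t in (0:ℝ)..T, W t = V T - V 0 :=
    intervalIntegral.integral_eq_sub_of_hasDerivAt (fun t ht => hV t (hIcc ▸ ht)) hWint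
  -- pointwise bound W ≤ G on [0,T]
  have hWG : ∀ t ∈ Icc (0:ℝ) T, W t ≤ G t := by
    intro t ht
    have hcs := completion_sq (A t) (B t) (CI t) (DI t) (P t) (P' t) γ (x t) (d t)
      (hPsym t ht) (hdet t ht) (hRDE t ht)
    set w : Fin nd → ℝ := d t +
      (((DI t)ᵀ * DI t - γ ^ 2 • (1 : Matrix (Fin nd) (Fin nd) ℝ))⁻¹ *
        (P t * B t + (CI t)ᵀ * DI t)ᵀ) *ᵥ x t with hwdef
    have hneg : w ⬝ᵥ (((DI t)ᵀ * DI t - γ ^ 2 • (1 : Matrix (Fin nd) (Fin nd) ℝ)) *ᵥ w) ≤ 0 := by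
      rcases eq_or_ne w 0 with hw | hw
      · rw [hw]; simp
      · exact (hR t ht w hw).le
    simp only [hWdef, hGdef, hfdef]
    rw [hwdef] at hneg
    linarith [hcs, hneg]
  -- integral comparison
  have hint_le : ∫ t in (0:ℝ)..T, W t ≤ ∫ t in (0:ℝ)..T, G t :=
    intervalIntegral.integral_mono_on hT.le hWint hGint hWG
  -- split the integral of G
  have hGsplit : ∫ t in (0:ℝ)..T, G t =
      γ ^ 2 * (∫ t in (0:ℝ)..T, d t ⬝ᵥ d t) -
      ∫ t in (0:ℝ)..T, (CI t *ᵥ x t + DI t *ᵥ d t) ⬝ᵥ (CI t *ᵥ x t + DI t *ᵥ d t) := by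
    rw [hGdef]
    rw [intervalIntegral.integral_sub (hdint.const_mul _) heIint,
      intervalIntegral.integral_const_mul]
  -- endpoints
  have hV0 : V 0 = 0 := by
    simp only [hVdef, hx0, zero_dotProduct]
  have hVT : V T = (CE T *ᵥ x T) ⬝ᵥ (CE T *ᵥ x T) := by
    simp only [hVdef, hPT]
    rw [mvdm]
  linarith [hFTC, hint_le, hGsplit, hV0, hVT]
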